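/- Let D be a nontrivial 2-(p^d,k,2) design with point set the finite field F = GF(p^d), admitting the one-dimensional affine group AGL_1(p^d) = {x ↦ ax + b : a ∈ F*, b ∈ F} as a flag-transitive automorphism group. Then p^d ≡ 1 (mod 3), k = 3, and the blocks of D are exactly the sets aH + b with a ∈ F* and b ∈ F, where H is the unique subgroup of order 3 of the multiplicative group F*. -/

import Mathlib

set_option linter.unusedSectionVars false
set_option maxHeartbeats 2000000

section helpers
variable {F : Type*} [Field F] [Fintype F] [DecidableEq F]

lemma aff_inj (a b : F) (ha : a ≠ 0) : Function.Injective (fun x => a * x + b) := by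
  intro x y h
  simp only [add_left_inj] at h
  exact mul_left_cancel₀ ha h

lemma img_norm (B : Finset F) {f g : F → F} (h : ∀ x, f x = g x) :
    B.image f = B.image g := by
  apply Finset.image_congr; intro x _; exact h x

lemma aff_img_comp (B : Finset F) (a b c e : F) :
    (B.image (fun x => a*x+b)).image (fun x => c*x+e)
      = B.image (fun x => (c*a)*x + (c*b+e)) := by
  rw [Finset.image_image]
  apply Finset.image_congr
  intro x _
  simp only [Function.comp]
  ring

lemma aff_img_inv (B C : Finset F) (a b : F) (ha : a ≠ 0)
    (h : B.image (fun x => a*x+b) = C) :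
    C.image (fun x => a⁻¹*x + (-(a⁻¹*b))) = B := by
  rw [← h, aff_img_comp, inv_mul_cancel₀ ha]
  have : (fun x : F => 1*x + (a⁻¹*b + -(a⁻¹*b))) = id := by
    funext x; simp
  rw [this, Finset.image_id]

lemma count1 (𝓑 : Finset (Finset F)) (k : ℕ)
    (hk : ∀ B ∈ 𝓑, B.card = k)
    (hlam : ∀ y : F, y ≠ 0 → (𝓑.filter (fun B => (0:F) ∈ B ∧ y ∈ B)).card = 2) :
    (𝓑.filter (fun C => (0:F) ∈ C)).card * (k-1) = 2 * (Fintype.card F - 1) := by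
  classical
  calc (𝓑.filter (fun C => (0:F) ∈ C)).card * (k-1)
      = ∑ C ∈ 𝓑.filter (fun C => (0:F) ∈ C), (k-1) := by
        rw [Finset.sum_const, smul_eq_mul]
    _ = ∑ C ∈ 𝓑.filter (fun C => (0:F) ∈ C), (C.erase 0).card := by
        apply Finset.sum_congr rfl
        intro C hC
        rw [Finset.mem_filter] at hC
        rw [Finset.card_erase_of_mem hC.2, hk C hC.1]
    _ = ∑ C ∈ 𝓑.filter (fun C => (0:F) ∈ C),
          ((Finset.univ.erase (0:F)).filter (fun y => y ∈ C)).card := by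
        apply Finset.sum_congr rfl
        intro C _
        congr 1
        ext z
        simp [Finset.mem_erase, and_comm]
    _ = ∑ C ∈ 𝓑.filter (fun C => (0:F) ∈ C), ∑ y ∈ Finset.univ.erase (0:F),
          (if y ∈ C then 1 else 0) := by
        apply Finset.sum_congr rfl; intro C _; rw [Finset.card_filter]
    _ = ∑ y ∈ Finset.univ.erase (0:F), ∑ C ∈ 𝓑.filter (fun C => (0:F) ∈ C),
          (if y ∈ C then 1 else 0) := Finset.sum_comm
    _ = ∑ y ∈ Finset.univ.erase (0:F),
          ((𝓑.filter (fun C => (0:F) ∈ C)).filter (fun C => y ∈ C)).card := by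
        apply Finset.sum_congr rfl; intro y _; rw [Finset.card_filter]
    _ = ∑ y ∈ Finset.univ.erase (0:F), 2 := by
        apply Finset.sum_congr rfl
        intro y hy
        rw [Finset.mem_erase] at hy
        rw [Finset.filter_filter]
        exact hlam y hy.1
    _ = 2 * (Fintype.card F - 1) := by
        rw [Finset.sum_const, smul_eq_mul, Finset.card_erase_of_mem (Finset.mem_univ _),
          Finset.card_univ, mul_comm]

end helpers

theorem stmt_5 (p d k : ℕ) [Fact p.Prime] (hd : 1 ≤ d)
    (F : Type*) [Field F] [Fintype F] [DecidableEq F]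
    (hcard : Fintype.card F = p ^ d)
    (𝓑 : Finset (Finset F))
    (hk : ∀ B ∈ 𝓑, B.card = k)
    (hlam : ∀ x y : F, x ≠ y → (𝓑.filter (fun B => x ∈ B ∧ y ∈ B)).card = 2)
    (hk2 : 2 < k) (hkv : k < p ^ d)
    (hinv : ∀ B ∈ 𝓑, ∀ a b : F, a ≠ 0 → B.image (fun x => a * x + b) ∈ 𝓑)
    (hflag : ∀ B ∈ 𝓑, ∀ C ∈ 𝓑, ∀ x ∈ B, ∀ y ∈ C,
      ∃ a b : F, a ≠ 0 ∧ B.image (fun z => a * z + b) = C ∧ a * x + b = y) :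
    p ^ d % 3 = 1 ∧ k = 3 ∧
    (∀ S : Finset F, S ∈ 𝓑 ↔ ∃ a b : F, a ≠ 0 ∧
      (↑S : Set F) = (fun x => a * x + b) '' {x : F | x ^ 3 = 1}) := by
  classical
  -- a block through 0
  obtain ⟨B, hB, h0B⟩ : ∃ B ∈ 𝓑, (0:F) ∈ B := by
    obtain ⟨y, hy⟩ := exists_ne (0:F)
    have h2 := hlam 0 y (Ne.symm hy)
    have hne : (𝓑.filter fun B => (0:F) ∈ B ∧ y ∈ B).Nonempty := by
      rw [← Finset.card_pos, h2]; norm_num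
    obtain ⟨B, hB⟩ := hne
    rw [Finset.mem_filter] at hB
    exact ⟨B, hB.1, hB.2.1⟩
  have hkB : B.card = k := hk B hB
  -- blocks through 0 are multiplicative images of B
  have hC0 : ∀ C ∈ 𝓑, (0:F) ∈ C → ∃ a : F, a ≠ 0 ∧ B.image (fun x => a*x + 0) = C := by
    intro C hC h0C
    obtain ⟨a, b, ha, himg, heval⟩ := hflag B hB C hC 0 h0B 0 h0C
    have hb : b = 0 := by simpa using heval
    subst hb
    exact ⟨a, ha, himg⟩
  set 𝓑₀ := 𝓑.filter (fun C => (0:F) ∈ C) with h𝓑₀def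
  set S := Finset.univ.filter (fun a : F => a ≠ 0 ∧ B.image (fun x => a*x+0) = B) with hSdef
  set T := Finset.univ.filter (fun w : F => B.image (fun x => 1*x+w) = B) with hTdef
  have hmemS : ∀ a : F, a ∈ S ↔ a ≠ 0 ∧ B.image (fun x => a*x+0) = B := by
    intro a; rw [hSdef, Finset.mem_filter]; simp
  have hmemT : ∀ w : F, w ∈ T ↔ B.image (fun x => 1*x+w) = B := by
    intro w; rw [hTdef, Finset.mem_filter]; simp
  -- counting: r * (k-1) = 2*(q-1)
  have h1 : 𝓑₀.card * (k-1) = 2 * (Fintype.card F - 1) :=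
    count1 𝓑 k hk (fun y hy => hlam 0 y (Ne.symm hy))
  have hmulcomp : ∀ (a c : F), (B.image (fun x => a*x+0)).image (fun x => c*x+0)
      = B.image (fun x => (c*a)*x+0) := by
    intro a c; rw [aff_img_comp]; apply img_norm; intro x; ring
  have hmulinv : ∀ (a : F) (C : Finset F), a ≠ 0 → B.image (fun x => a*x+0) = C →
      C.image (fun x => a⁻¹*x+0) = B := by
    intro a C ha h
    have h' := aff_img_inv B C a 0 ha h
    rw [← h']
    apply img_norm; intro x; ring
  -- orbit-stabilizer: q - 1 = r * s
  have h2 : Fintype.card F - 1 = 𝓑₀.card * S.card := by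
    have Hmem : ∀ a ∈ Finset.univ.erase (0:F),
        (fun a : F => B.image (fun x => a*x+0)) a ∈ 𝓑₀ := by
      intro a ha
      rw [Finset.mem_erase] at ha
      rw [h𝓑₀def, Finset.mem_filter]
      exact ⟨hinv B hB a 0 ha.1, Finset.mem_image.mpr ⟨0, h0B, by ring⟩⟩
    have hstep := Finset.card_eq_sum_card_fiberwise Hmem
    have hcarde : (Finset.univ.erase (0:F)).card = Fintype.card F - 1 := by
      rw [Finset.card_erase_of_mem (Finset.mem_univ _), Finset.card_univ]
    rw [hcarde] at hstep
    rw [hstep]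
    rw [Finset.sum_congr rfl (fun C hC => ?_), Finset.sum_const, smul_eq_mul]
    obtain ⟨a₀, ha₀, hA₀⟩ := by
      rw [h𝓑₀def, Finset.mem_filter] at hC
      exact hC0 C hC.1 hC.2
    apply Finset.card_nbij' (fun a => a₀⁻¹ * a) (fun e => a₀ * e)
    · intro a ha
      rw [Finset.mem_coe, Finset.mem_filter, Finset.mem_erase] at ha
      obtain ⟨⟨ha1, _⟩, ha2⟩ := ha
      rw [Finset.mem_coe, hmemS]
      refine ⟨mul_ne_zero (inv_ne_zero ha₀) ha1, ?_⟩
      calc B.image (fun x => (a₀⁻¹*a)*x+0)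
          = (B.image (fun x => a*x+0)).image (fun x => a₀⁻¹*x+0) := (hmulcomp a a₀⁻¹).symm
        _ = B := by rw [ha2, ← hA₀]; exact hmulinv a₀ _ ha₀ rfl
    · intro e he
      rw [Finset.mem_coe, hmemS] at he
      rw [Finset.mem_coe, Finset.mem_filter, Finset.mem_erase]
      refine ⟨⟨mul_ne_zero ha₀ he.1, Finset.mem_univ _⟩, ?_⟩
      calc B.image (fun x => (a₀*e)*x+0)
          = (B.image (fun x => e*x+0)).image (fun x => a₀*x+0) := (hmulcomp e a₀).symm
        _ = C := by rw [he.2, hA₀]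
    · intro a _; field_simp
    · intro e _; field_simp
  -- k - 1 = 2 * s
  have hr1 : 1 ≤ 𝓑₀.card := by
    apply Finset.card_pos.mpr
    exact ⟨B, by rw [h𝓑₀def, Finset.mem_filter]; exact ⟨hB, h0B⟩⟩
  have hks : k - 1 = 2 * S.card := by
    have := h1
    rw [h2] at this
    have h' : 𝓑₀.card * (k-1) = 𝓑₀.card * (2 * S.card) := by rw [this]; ring
    exact Nat.eq_of_mul_eq_mul_left hr1 h'
  have hs1 : 1 ≤ S.card := by
    apply Finset.card_pos.mpr
    refine ⟨1, (hmemS 1).mpr ⟨one_ne_zero, ?_⟩⟩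
    rw [img_norm B (g := id) (fun x => by simp), Finset.image_id]
  -- element-wise closure facts for T
  have hTadd : ∀ w ∈ T, ∀ w' ∈ T, w + w' ∈ T := by
    intro w hw w' hw'
    rw [hmemT] at hw hw' ⊢
    calc B.image (fun x => 1*x+(w+w'))
        = (B.image (fun x => 1*x+w)).image (fun x => 1*x+w') := by
          rw [aff_img_comp]; apply img_norm; intro x; ring
      _ = B := by rw [hw, hw']
  have hTneg : ∀ w ∈ T, -w ∈ T := by
    intro w hw
    rw [hmemT] at hw ⊢
    have h' := aff_img_inv B B 1 w one_ne_zero hw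
    rw [inv_one] at h'
    rw [img_norm B (g := fun x => 1*x + -(1*w)) (fun x => by ring)]
    exact h'
  have hT0 : (0:F) ∈ T := by
    rw [hmemT]
    rw [img_norm B (g := id) (fun x => by simp), Finset.image_id]
  have hTmemB : ∀ w ∈ T, w ∈ B := by
    intro w hw
    rw [hmemT] at hw
    rw [← hw]
    exact Finset.mem_image.mpr ⟨0, h0B, by ring⟩
  -- T is trivial
  have hTtriv : ∀ w : F, B.image (fun x => 1*x+w) = B → w = 0 := by
    by_contra hcon
    push_neg at hcon
    obtain ⟨w₀, hw₀img, hw₀0⟩ := hcon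
    have hw₀T : w₀ ∈ T := (hmemT w₀).mpr hw₀img
    -- T.card divides k
    have htk : T.card ∣ k := by
      have Hmem : ∀ x ∈ B, (fun x : F => T.image (fun w => x + w)) x
          ∈ B.image (fun x : F => T.image (fun w => x + w)) :=
        fun x hx => Finset.mem_image_of_mem _ hx
      have hstep := Finset.card_eq_sum_card_fiberwise Hmem
      have hfib : ∀ C ∈ B.image (fun x : F => T.image (fun w => x + w)),
          (B.filter (fun y => T.image (fun w => y + w) = C)).card = T.card := by
        intro C hC
        obtain ⟨x, hxB, rfl⟩ := Finset.mem_image.mp hC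
        have hfeq : B.filter (fun y => T.image (fun w => y + w) = T.image (fun w => x + w))
            = T.image (fun w => x + w) := by
          ext y
          simp only [Finset.mem_filter]
          constructor
          · rintro ⟨hyB, hy⟩
            have hmy : y ∈ T.image (fun w => y + w) :=
              Finset.mem_image.mpr ⟨0, hT0, by ring⟩
            rw [hy] at hmy
            exact hmy
          · intro hy
            obtain ⟨w, hwT, rfl⟩ := Finset.mem_image.mp hy
            constructor
            · have himg := (hmemT w).mp hwT
              rw [← himg]
              exact Finset.mem_image.mpr ⟨x, hxB, by ring⟩
            · ext z
              simp only [Finset.mem_image]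
              constructor
              · rintro ⟨w', hw', rfl⟩
                exact ⟨w + w', hTadd w hwT w' hw', by ring⟩
              · rintro ⟨w', hw', rfl⟩
                exact ⟨-w + w', hTadd _ (hTneg w hwT) _ hw', by ring⟩
        rw [hfeq, Finset.card_image_of_injective _ (add_right_injective x)]
      rw [Finset.sum_congr rfl hfib, Finset.sum_const, smul_eq_mul, hkB] at hstep
      exact ⟨_, by rw [hstep, Nat.mul_comm]⟩
    -- the stabilizing "field" F₀
    set F₀ := Finset.univ.filter (fun a : F => ∀ w ∈ T, a*w ∈ T) with hF₀def
    have hmemF₀ : ∀ a : F, a ∈ F₀ ↔ ∀ w ∈ T, a*w ∈ T := by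
      intro a; rw [hF₀def, Finset.mem_filter]; simp
    have hSF₀ : ∀ a ∈ S, a ∈ F₀ := by
      intro a haS
      obtain ⟨ha, haB⟩ := (hmemS a).mp haS
      rw [hmemF₀]
      intro w hwT
      rw [hmemT] at hwT ⊢
      calc B.image (fun x => 1*x + a*w)
          = ((B.image (fun x => a⁻¹*x+0)).image (fun x => 1*x+w)).image (fun x => a*x+0) := by
            rw [aff_img_comp, aff_img_comp]
            apply img_norm; intro x
            field_simp
            ring
        _ = B := by rw [hmulinv a B ha haB, hwT, haB]
    have hF₀sub : ∀ a ∈ F₀, ∀ b ∈ F₀, a - b ∈ F₀ := by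
      intro a ha b hb
      rw [hmemF₀] at ha hb ⊢
      intro w hw
      have h1 := ha w hw
      have h2 := hb w hw
      have hr : (a-b)*w = a*w + (-(b*w)) := by ring
      rw [hr]
      exact hTadd _ h1 _ (hTneg _ h2)
    have hF₀mul : ∀ a ∈ F₀, ∀ b ∈ F₀, a * b ∈ F₀ := by
      intro a ha b hb
      rw [hmemF₀] at ha hb ⊢
      intro w hw
      have hr : (a*b)*w = a*(b*w) := by ring
      rw [hr]
      exact ha _ (hb w hw)
    have hF₀inv : ∀ a ∈ F₀, a ≠ 0 → a⁻¹ ∈ F₀ := by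
      intro a ha ha0
      rw [hmemF₀] at ha ⊢
      intro w hw
      have himgsub : T.image (fun w => a*w) ⊆ T := by
        intro z hz
        obtain ⟨w', hw', rfl⟩ := Finset.mem_image.mp hz
        exact ha w' hw'
      have heq : T.image (fun w => a*w) = T :=
        Finset.eq_of_subset_of_card_le himgsub
          (le_of_eq (Finset.card_image_of_injective _ (mul_right_injective₀ ha0)).symm)
      rw [← heq] at hw
      obtain ⟨w', hw', hww⟩ := Finset.mem_image.mp hw
      rw [← hww]
      have hx : a⁻¹*(a*w') = w' := by field_simp
      rw [hx]
      exact hw'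
    have h0F₀ : (0:F) ∈ F₀ := by
      rw [hmemF₀]; intro w _; rw [zero_mul]; exact hT0
    have h0S : (0:F) ∉ S := fun h => ((hmemS 0).mp h).1 rfl
    have hcards : S.card + 1 ≤ F₀.card := by
      have hsub : insert (0:F) S ⊆ F₀ :=
        Finset.insert_subset h0F₀ (fun a ha => hSF₀ a ha)
      calc S.card + 1 = (insert (0:F) S).card := (Finset.card_insert_of_notMem h0S).symm
        _ ≤ F₀.card := Finset.card_le_card hsub
    have hcardt : F₀.card ≤ T.card := by
      apply Finset.card_le_card_of_injOn (fun a => a * w₀)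
      · intro a ha
        exact (hmemF₀ a).mp ha w₀ hw₀T
      · intro a _ b _ h
        exact mul_right_cancel₀ hw₀0 h
    -- T.card = k
    have htkeq : T.card = k := by
      obtain ⟨m, hm⟩ := htk
      match m, hm with
      | 0, hm => omega
      | 1, hm => omega
      | (m+2), hm =>
        exfalso
        have : T.card * (m+2) ≥ 2 * T.card := by nlinarith
        omega
    have hTB : T = B := by
      apply Finset.eq_of_subset_of_card_le (fun w hw => hTmemB w hw)
      rw [hkB, htkeq]
    set W := F₀.image (fun a => a * w₀) with hWdef
    have hWinj : Function.Injective (fun a : F => a * w₀) :=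
      fun a b h => mul_right_cancel₀ hw₀0 h
    have hWsub : W ⊆ B := by
      intro z hz
      obtain ⟨b, hb, rfl⟩ := Finset.mem_image.mp hz
      have : b * w₀ ∈ T := (hmemF₀ b).mp hb w₀ hw₀T
      rw [hTB] at this
      exact this
    have hWcard : W.card = F₀.card := Finset.card_image_of_injective _ hWinj
    by_cases hWB : W = B
    · have hF₀S : F₀ ⊆ insert (0:F) S := by
        intro b hb
        rcases eq_or_ne b 0 with rfl | hb0
        · exact Finset.mem_insert_self _ _
        · apply Finset.mem_insert_of_mem
          rw [hmemS]
          refine ⟨hb0, ?_⟩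
          have hsub : B.image (fun x => b*x+0) ⊆ B := by
            intro z hz
            obtain ⟨y, hy, rfl⟩ := Finset.mem_image.mp hz
            have hyT : y ∈ T := by rw [hTB]; exact hy
            have : b*y ∈ T := (hmemF₀ b).mp hb y hyT
            rw [hTB] at this
            simpa using this
          exact Finset.eq_of_subset_of_card_le hsub
            (le_of_eq (Finset.card_image_of_injective _ (aff_inj b 0 hb0)).symm)
      have hle : F₀.card ≤ S.card + 1 := by
        calc F₀.card ≤ (insert (0:F) S).card := Finset.card_le_card hF₀S
          _ ≤ S.card + 1 := Finset.card_insert_le _ _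
      have hkW : k = F₀.card := by rw [← hWcard, hWB, hkB]
      omega
    · obtain ⟨w', hw'B, hw'W⟩ := Finset.exists_of_ssubset (ssubset_of_subset_of_ne hWsub hWB)
      have hw'T : w' ∈ T := by rw [hTB]; exact hw'B
      have hmaps : ∀ q ∈ F₀ ×ˢ F₀, (fun q : F × F => q.1 * w₀ + q.2 * w') q ∈ B := by
        rintro ⟨a, b⟩ hq
        rw [Finset.mem_product] at hq
        have h1 : a * w₀ ∈ T := (hmemF₀ a).mp hq.1 w₀ hw₀T
        have h2 : b * w' ∈ T := (hmemF₀ b).mp hq.2 w' hw'T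
        have := hTadd _ h1 _ h2
        rw [hTB] at this
        exact this
      have hinj2 : Set.InjOn (fun q : F × F => q.1 * w₀ + q.2 * w') ↑(F₀ ×ˢ F₀) := by
        rintro ⟨a, b⟩ hab ⟨a', b'⟩ hab' heq
        simp only [Finset.coe_product, Set.mem_prod, Finset.mem_coe] at hab hab'
        simp only at heq
        by_cases hbb : b = b'
        · subst hbb
          have : a * w₀ = a' * w₀ := by linear_combination heq
          have haa : a = a' := mul_right_cancel₀ hw₀0 this
          rw [haa]
        · exfalso
          apply hw'W
          have hbne : b - b' ≠ 0 := sub_ne_zero.mpr hbb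
          have hw'eq : w' = ((b-b')⁻¹*(a'-a))*w₀ := by
            field_simp
            linear_combination heq
          have hcoef : (b-b')⁻¹*(a'-a) ∈ F₀ :=
            hF₀mul _ (hF₀inv _ (hF₀sub _ hab.2 _ hab'.2) hbne) _ (hF₀sub _ hab'.1 _ hab.1)
          rw [hWdef]
          exact Finset.mem_image.mpr ⟨_, hcoef, hw'eq.symm⟩
      have hcard2 : (F₀ ×ˢ F₀).card ≤ B.card :=
        Finset.card_le_card_of_injOn _ hmaps hinj2
      rw [Finset.card_product, hkB] at hcard2
      have h5 : (S.card+1)*(S.card+1) ≤ k :=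
        le_trans (Nat.mul_le_mul hcards hcards) hcard2
      have hkeq : k = 2*S.card+1 := by omega
      nlinarith [h5, hkeq, hs1]
  -- S is trivial
  have hStriv : ∀ a : F, a ∈ S → a = 1 := by
    intro a haS
    obtain ⟨ha0, haB⟩ := (hmemS a).mp haS
    obtain ⟨u, huB, hu0⟩ : ∃ u ∈ B, u ≠ 0 := by
      by_contra h
      push_neg at h
      have hsub : B ⊆ {0} := fun z hz => Finset.mem_singleton.mpr (h z hz)
      have := Finset.card_le_card hsub
      rw [hkB, Finset.card_singleton] at this
      omega
    obtain ⟨c, e, hc0, hcimg, hceval⟩ := hflag B hB B hB 0 h0B u huB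
    have he : e = u := by simpa using hceval
    rw [he] at hcimg
    have hcomp : B.image (fun x => 1*x + c⁻¹*(a*u - u)) = B := by
      calc B.image (fun x => 1*x + c⁻¹*(a*u - u))
          = (((B.image (fun x => a⁻¹*x+0)).image (fun x => c*x+u)).image
              (fun x => a*x+0)).image (fun x => c⁻¹*x + (-(c⁻¹*u))) := by
            rw [aff_img_comp, aff_img_comp, aff_img_comp]
            apply img_norm; intro x
            field_simp
            ring
        _ = B := by
            rw [hmulinv a B ha0 haB, hcimg, haB]
            exact aff_img_inv B B c u hc0 hcimg
    have hw := hTtriv _ hcomp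
    rcases mul_eq_zero.mp hw with h | h
    · exact absurd h (inv_ne_zero hc0)
    · have h' : (a - 1) * u = 0 := by linear_combination h
      rcases mul_eq_zero.mp h' with h'' | h''
      · exact sub_eq_zero.mp h''
      · exact absurd h'' hu0
  -- k = 3
  have hk3 : k = 3 := by
    have hSeq : S = {1} := by
      apply Finset.eq_singleton_iff_unique_mem.mpr
      constructor
      · refine (hmemS 1).mpr ⟨one_ne_zero, ?_⟩
        rw [img_norm B (g := id) (fun x => by simp), Finset.image_id]
      · exact hStriv
    rw [hSeq] at hks
    simp at hks
    omega
  -- B = {0, u, v}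
  obtain ⟨u, v, hu0, hv0, huv, hBuv⟩ :
      ∃ u v : F, u ≠ 0 ∧ v ≠ 0 ∧ u ≠ v ∧ B = {0, u, v} := by
    have hB3 : B.card = 3 := by rw [hkB, hk3]
    obtain ⟨x, y, z, hxy, hxz, hyz, hBxyz⟩ := Finset.card_eq_three.mp hB3
    have h0mem : (0:F) = x ∨ (0:F) = y ∨ (0:F) = z := by
      rw [hBxyz] at h0B
      simpa using h0B
    rcases h0mem with h0 | h0 | h0
    · subst h0
      exact ⟨y, z, Ne.symm hxy, Ne.symm hxz, hyz, hBxyz⟩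
    · subst h0
      refine ⟨x, z, hxy, Ne.symm hyz, hxz, ?_⟩
      rw [hBxyz, Finset.insert_comm]
    · subst h0
      refine ⟨x, y, hxz, hyz, hxy, ?_⟩
      rw [hBxyz]; ext w; simp; tauto
  -- the rotation: B = {0, x, α*x+x} with α² + α + 1 = 0
  obtain ⟨α, x, hα0, hα1, hquad, hx0, hBform⟩ :
      ∃ α x : F, α ≠ 0 ∧ α ≠ 1 ∧ α*α + α + 1 = 0 ∧ x ≠ 0 ∧ B = {0, x, α*x+x} := by
    have huB' : u ∈ B := by rw [hBuv]; simp
    have hvB' : v ∈ B := by rw [hBuv]; simp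
    obtain ⟨c, e, hc0, hcimg, hceval⟩ := hflag B hB B hB 0 h0B u huB'
    have he : e = u := by simpa using hceval
    rw [he] at hcimg
    have hc1 : c ≠ 1 := by
      intro h
      rw [h] at hcimg
      exact hu0 (hTtriv u hcimg)
    have hmemimg : ∀ z ∈ B, c*z + u ∈ B := by
      intro z hz
      rw [← hcimg]
      exact Finset.mem_image_of_mem _ hz
    have hσu : c*u + u ∈ B := hmemimg u huB'
    rw [hBuv] at hσu
    simp only [Finset.mem_insert, Finset.mem_singleton] at hσu
    have hσu_ne : c*u + u ≠ u := by
      intro h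
      rcases mul_eq_zero.mp (show c*u = 0 by linear_combination h) with h' | h'
      · exact hc0 h'
      · exact hu0 h'
    rcases hσu with h1 | h1 | h1
    · -- c*u + u = 0 : σ = -1 case
      have hσv : c*v + u ∈ B := hmemimg v hvB'
      rw [hBuv] at hσv
      simp only [Finset.mem_insert, Finset.mem_singleton] at hσv
      have hnu : c*v + u ≠ u := by
        intro h
        rcases mul_eq_zero.mp (show c*v = 0 by linear_combination h) with h' | h'
        · exact hc0 h'
        · exact hv0 h'
      have hn0 : c*v + u ≠ 0 := by
        intro h
        exact huv (mul_left_cancel₀ hc0 (by linear_combination h1 - h))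
      have hσv' : c*v + u = v := by tauto
      obtain ⟨c', e', hc'0, hc'img, hc'eval⟩ := hflag B hB B hB 0 h0B v hvB'
      have he' : e' = v := by simpa using hc'eval
      rw [he'] at hc'img
      have hc'1 : c' ≠ 1 := by
        intro h
        rw [h] at hc'img
        exact hv0 (hTtriv v hc'img)
      have hmemimg' : ∀ z ∈ B, c'*z + v ∈ B := by
        intro z hz
        rw [← hc'img]
        exact Finset.mem_image_of_mem _ hz
      have hτv : c'*v + v ∈ B := hmemimg' v hvB'
      rw [hBuv] at hτv
      simp only [Finset.mem_insert, Finset.mem_singleton] at hτv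
      have hτv_ne : c'*v + v ≠ v := by
        intro h
        rcases mul_eq_zero.mp (show c'*v = 0 by linear_combination h) with h' | h'
        · exact hc'0 h'
        · exact hv0 h'
      have hτu : c'*u + v ∈ B := hmemimg' u huB'
      rw [hBuv] at hτu
      simp only [Finset.mem_insert, Finset.mem_singleton] at hτu
      have hτu_nv : c'*u + v ≠ v := by
        intro h
        rcases mul_eq_zero.mp (show c'*u = 0 by linear_combination h) with h' | h'
        · exact hc'0 h'
        · exact hu0 h'
      rcases hτv with h2 | h2 | h2
      · -- c'*v + v = 0 : both involutive, char 3 contradiction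
        exfalso
        have hτu_n0 : c'*u + v ≠ 0 := by
          intro h
          exact huv (mul_left_cancel₀ hc'0 (by linear_combination h - h2))
        have hτu' : c'*u + v = u := by tauto
        have hcneg : c = -1 := by
          have : (c + 1) * u = 0 := by linear_combination h1
          rcases mul_eq_zero.mp this with h' | h'
          · linear_combination h'
          · exact absurd h' hu0
        have hc'neg : c' = -1 := by
          have : (c' + 1) * v = 0 := by linear_combination h2
          rcases mul_eq_zero.mp this with h' | h'
          · linear_combination h'
          · exact absurd h' hv0
        rw [hcneg] at hσv'
        rw [hc'neg] at hτu'
        have e1 : u = v + v := by linear_combination hσv'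
        have e2 : v = u + u := by linear_combination hτu'
        have h3u : u + u + u = 0 := by linear_combination -e1 - 2*e2
        have himg : B.image (fun z => 1*z + u) = B := by
          rw [hBuv]
          rw [Finset.image_insert, Finset.image_insert, Finset.image_singleton]
          have g1 : 1*(0:F)+u = u := by ring
          have g2 : 1*u+u = v := by linear_combination -e2
          have g3 : 1*v+u = 0 := by linear_combination e2 + h3u
          rw [g1, g2, g3, Finset.pair_comm v 0, Finset.insert_comm u 0]
        exact hu0 (hTtriv u himg)
      · -- c'*v + v = u : 3-cycle through v
        have hτu0 : c'*u + v = 0 := by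
          have hτu_nu : c'*u + v ≠ u := by
            intro h
            exact huv (mul_left_cancel₀ hc'0 (by linear_combination h2 - h)).symm
          tauto
        have hq : (c'*c' + c' + 1)*v = 0 := by linear_combination c'*h2 + hτu0
        have hquad' : c'*c' + c' + 1 = 0 := by
          rcases mul_eq_zero.mp hq with h' | h'
          · exact h'
          · exact absurd h' hv0
        refine ⟨c', v, hc'0, hc'1, hquad', hv0, ?_⟩
        rw [hBuv, ← h2, Finset.pair_comm (c'*v+v) v]
      · exact absurd h2 hτv_ne
    · exact absurd h1 hσu_ne
    · -- c*u + u = v : 3-cycle through u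
      have hσv : c*v + u ∈ B := hmemimg v hvB'
      rw [hBuv] at hσv
      simp only [Finset.mem_insert, Finset.mem_singleton] at hσv
      have hnu : c*v + u ≠ u := by
        intro h
        rcases mul_eq_zero.mp (show c*v = 0 by linear_combination h) with h' | h'
        · exact hc0 h'
        · exact hv0 h'
      have hnv : c*v + u ≠ v := by
        intro h
        exact huv (mul_left_cancel₀ hc0 (by linear_combination h - h1)).symm
      have hσv0 : c*v + u = 0 := by tauto
      have hq : (c*c + c + 1)*u = 0 := by linear_combination c*h1 + hσv0
      have hquad' : c*c + c + 1 = 0 := by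
        rcases mul_eq_zero.mp hq with h' | h'
        · exact h'
        · exact absurd h' hu0
      exact ⟨c, u, hc0, hc1, hquad', hu0, by rw [hBuv, ← h1]⟩
  have hα3 : α ^ 3 = 1 := by linear_combination (α - 1) * hquad
  -- p^d % 3 = 1
  have hmod : p ^ d % 3 = 1 := by
    haveI : Fact (Nat.Prime 3) := ⟨by norm_num⟩
    have hord : orderOf (Units.mk0 α hα0) = 3 := by
      apply orderOf_eq_prime
      · apply Units.ext
        push_cast
        exact hα3
      · intro h
        apply hα1
        have := congrArg Units.val h
        simpa using this
    have hdvd : (3:ℕ) ∣ Fintype.card Fˣ := hord ▸ orderOf_dvd_card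
    rw [Fintype.card_units, hcard] at hdvd
    have hq2 : 2 < p ^ d := lt_trans hk2 hkv
    omega
  -- cube roots of unity
  have hset3 : {z : F | z ^ 3 = 1} = {1, α, α*α} := by
    ext z
    have key : z^3 - 1 = (z-1)*((z-α)*(z-α*α)) := by
      linear_combination (z^2 - α*z + α - 1) * hquad
    simp only [Set.mem_setOf_eq, Set.mem_insert_iff, Set.mem_singleton_iff]
    constructor
    · intro hz
      have hprod : (z-1)*((z-α)*(z-α*α)) = 0 := by rw [← key, hz]; ring
      rcases mul_eq_zero.mp hprod with h | h
      · left; exact sub_eq_zero.mp h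
      · rcases mul_eq_zero.mp h with h' | h'
        · right; left; exact sub_eq_zero.mp h'
        · right; right; exact sub_eq_zero.mp h'
    · intro hz
      have hprod : (z-1)*((z-α)*(z-α*α)) = 0 := by
        rcases hz with h | h | h <;> subst h <;> ring
      have : z^3 - 1 = 0 := by rw [key, hprod]
      exact sub_eq_zero.mp this
  -- B as image of cube roots
  set cc := x * (α - 1)⁻¹ with hccdef
  have hαne : α - 1 ≠ 0 := sub_ne_zero.mpr hα1
  have hcc0 : cc ≠ 0 := mul_ne_zero hx0 (inv_ne_zero hαne)
  have hBset : (↑B : Set F) = (fun z => cc*z + (-cc)) '' {z : F | z ^ 3 = 1} := by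
    rw [hset3]
    simp only [Set.image_insert_eq, Set.image_singleton]
    have g1 : cc*(1:F) + (-cc) = 0 := by ring
    have g2 : cc*α + (-cc) = x := by
      rw [hccdef]
      field_simp
      ring
    have g3 : cc*(α*α) + (-cc) = α*x + x := by
      rw [hccdef]
      field_simp
      ring
    rw [g1, g2, g3, hBform]
    simp
  refine ⟨hmod, hk3, ?_⟩
  intro Sb
  constructor
  · intro hSb
    have hSbcard : Sb.card = k := hk Sb hSb
    obtain ⟨x₀, hx₀⟩ : Sb.Nonempty := by
      rw [← Finset.card_pos, hSbcard]; omega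
    have hS' : Sb.image (fun z => 1*z + (-x₀)) ∈ 𝓑 := hinv Sb hSb 1 (-x₀) one_ne_zero
    have h0S' : (0:F) ∈ Sb.image (fun z => 1*z + (-x₀)) :=
      Finset.mem_image.mpr ⟨x₀, hx₀, by ring⟩
    obtain ⟨a', b', ha', himg', heval'⟩ := hflag B hB _ hS' 0 h0B 0 h0S'
    have hb' : b' = 0 := by simpa using heval'
    rw [hb'] at himg'
    have hSbeq : Sb = B.image (fun z => a'*z + x₀) := by
      have h1' : (Sb.image (fun z => 1*z + (-x₀))).image (fun z => 1*z + x₀) = Sb := by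
        rw [aff_img_comp]
        rw [img_norm Sb (g := id) (fun z => by show (1*1)*z + (1*(-x₀)+x₀) = z; ring)]
        exact Finset.image_id
      rw [← h1', ← himg', aff_img_comp]
      apply img_norm; intro z; ring
    refine ⟨a'*cc, a'*(-cc) + x₀, mul_ne_zero ha' hcc0, ?_⟩
    rw [hSbeq, Finset.coe_image, hBset, Set.image_image]
    have hfun : (fun z => a'*(cc*z + -cc) + x₀) = (fun z : F => (a'*cc)*z + (a'*(-cc)+x₀)) := by
      funext z; ring
    rw [hfun]
  · rintro ⟨a, b, ha, hab⟩
    have hm : B.image (fun z => (a*cc⁻¹)*z + (a + b)) ∈ 𝓑 :=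
      hinv B hB _ _ (mul_ne_zero ha (inv_ne_zero hcc0))
    have hSbeq : Sb = B.image (fun z => (a*cc⁻¹)*z + (a + b)) := by
      apply Finset.coe_injective
      rw [Finset.coe_image, hBset, Set.image_image, hab]
      have hfun : (fun z => (a*cc⁻¹)*(cc*z + -cc) + (a+b)) = (fun z : F => a*z+b) := by
        funext z; field_simp; ring
      rw [hfun]
    rw [hSbeq]
    exact hm
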